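/- Let Ω : ℝ × (0,∞) → ℝ be Ω(t,r) = 2/(√(1+(t−r)²)·√(1+(t+r)²)). Then Ω satisfies ∂²_t Ω − r^{-2} ∂_r (r² ∂_r Ω) = Ω³ on ℝ × (0,∞). -/

import Mathlib

noncomputable def hh (x : ℝ) : ℝ := (Real.sqrt (1 + x ^ 2))⁻¹

noncomputable def gg (x : ℝ) : ℝ := -x * hh x ^ 3

noncomputable def ggd (x : ℝ) : ℝ := -hh x ^ 3 + 3 * x ^ 2 * hh x ^ 5

lemma one_add_sq_pos (x : ℝ) : (0:ℝ) < 1 + x ^ 2 := by positivity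

lemma sqrt_pos' (x : ℝ) : 0 < Real.sqrt (1 + x ^ 2) := Real.sqrt_pos.2 (one_add_sq_pos x)

lemma hh_sq (x : ℝ) : hh x ^ 2 = (1 + x ^ 2)⁻¹ := by
  unfold hh
  rw [inv_pow, Real.sq_sqrt (one_add_sq_pos x).le]

lemma hasDerivAt_hh (x : ℝ) : HasDerivAt hh (gg x) x := by
  have h1 : HasDerivAt (fun y : ℝ => 1 + y ^ 2) (2 * x) x := by
    simpa [Function.comp_def] using (hasDerivAt_pow 2 x).const_add 1
  have h2 := (h1.sqrt (one_add_sq_pos x).ne')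
  have h3 := h2.inv (sqrt_pos' x).ne'
  refine h3.congr_deriv ?_
  symm
  unfold gg hh
  have hs := (sqrt_pos' x).ne'
  have hsq : Real.sqrt (1 + x ^ 2) ^ 2 = 1 + x ^ 2 := Real.sq_sqrt (one_add_sq_pos x).le
  field_simp

lemma hasDerivAt_gg (x : ℝ) : HasDerivAt gg (ggd x) x := by
  have := (hasDerivAt_id x).neg.mul ((hasDerivAt_hh x).pow 3)
  refine this.congr_deriv ?_
  symm
  unfold ggd gg
  simp only [Pi.neg_apply, Pi.pow_apply, id_eq]
  ring

theorem stmt_13 :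
    let Ω : ℝ → ℝ → ℝ := fun t r =>
      2 / (Real.sqrt (1 + (t - r) ^ 2) * Real.sqrt (1 + (t + r) ^ 2))
    ∀ t r : ℝ, 0 < r →
      deriv (fun s : ℝ => deriv (fun s' : ℝ => Ω s' r) s) t
        - (1 / r ^ 2) * deriv (fun ρ : ℝ => ρ ^ 2 * deriv (fun ρ' : ℝ => Ω t ρ') ρ) r
      = (Ω t r) ^ 3 := by
  intro Ω t r hr
  have hΩ : ∀ s ρ : ℝ, Ω s ρ = 2 * (hh (s - ρ) * hh (s + ρ)) := by
    intro s ρ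
    simp only [Ω, hh]
    rw [div_eq_mul_inv, mul_inv]
  -- first t-derivative
  have derivT : ∀ s : ℝ, HasDerivAt (fun s' : ℝ => 2 * (hh (s' - r) * hh (s' + r)))
      (2 * (gg (s - r) * hh (s + r) + hh (s - r) * gg (s + r))) s := by
    intro s
    have hu : HasDerivAt (fun s' : ℝ => hh (s' - r)) (gg (s - r)) s := by
      simpa [Function.comp_def] using (hasDerivAt_hh (s - r)).comp s ((hasDerivAt_id s).sub_const r)
    have hv : HasDerivAt (fun s' : ℝ => hh (s' + r)) (gg (s + r)) s := by
      simpa [Function.comp_def] using (hasDerivAt_hh (s + r)).comp s ((hasDerivAt_id s).add_const r)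
    exact (hu.mul hv).const_mul 2
  -- second t-derivative
  have derivT2 : HasDerivAt (fun s : ℝ => 2 * (gg (s - r) * hh (s + r) + hh (s - r) * gg (s + r)))
      (2 * ((ggd (t - r) * hh (t + r) + gg (t - r) * gg (t + r))
        + (gg (t - r) * gg (t + r) + hh (t - r) * ggd (t + r)))) t := by
    have hu : HasDerivAt (fun s : ℝ => hh (s - r)) (gg (t - r)) t := by
      simpa [Function.comp_def] using (hasDerivAt_hh (t - r)).comp t ((hasDerivAt_id t).sub_const r)
    have hv : HasDerivAt (fun s : ℝ => hh (s + r)) (gg (t + r)) t := by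
      simpa [Function.comp_def] using (hasDerivAt_hh (t + r)).comp t ((hasDerivAt_id t).add_const r)
    have hgu : HasDerivAt (fun s : ℝ => gg (s - r)) (ggd (t - r)) t := by
      simpa [Function.comp_def] using (hasDerivAt_gg (t - r)).comp t ((hasDerivAt_id t).sub_const r)
    have hgv : HasDerivAt (fun s : ℝ => gg (s + r)) (ggd (t + r)) t := by
      simpa [Function.comp_def] using (hasDerivAt_gg (t + r)).comp t ((hasDerivAt_id t).add_const r)
    exact ((hgu.mul hv).add (hu.mul hgv)).const_mul 2
  -- first r-derivative
  have derivR : ∀ ρ : ℝ, HasDerivAt (fun ρ' : ℝ => 2 * (hh (t - ρ') * hh (t + ρ')))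
      (2 * (-gg (t - ρ) * hh (t + ρ) + hh (t - ρ) * gg (t + ρ))) ρ := by
    intro ρ
    have hu : HasDerivAt (fun ρ' : ℝ => hh (t - ρ')) (-gg (t - ρ)) ρ := by
      have := (hasDerivAt_hh (t - ρ)).comp ρ ((hasDerivAt_id ρ).const_sub t)
      simpa [Function.comp_def] using this
    have hv : HasDerivAt (fun ρ' : ℝ => hh (t + ρ')) (gg (t + ρ)) ρ := by
      simpa [Function.comp_def] using (hasDerivAt_hh (t + ρ)).comp ρ ((hasDerivAt_id ρ).const_add t)
    exact (hu.mul hv).const_mul 2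
  -- derivative of the r-flux
  have derivR2 : HasDerivAt (fun ρ : ℝ => ρ ^ 2 *
        (2 * (-gg (t - ρ) * hh (t + ρ) + hh (t - ρ) * gg (t + ρ))))
      (2 * r ^ 1 * (2 * (-gg (t - r) * hh (t + r) + hh (t - r) * gg (t + r)))
        + r ^ 2 * (2 * ((ggd (t - r) * hh (t + r) + -gg (t - r) * gg (t + r))
          + (-gg (t - r) * gg (t + r) + hh (t - r) * ggd (t + r))))) r := by
    have hu : HasDerivAt (fun ρ : ℝ => hh (t - ρ)) (-gg (t - r)) r := by
      simpa [Function.comp_def] using (hasDerivAt_hh (t - r)).comp r ((hasDerivAt_id r).const_sub t)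
    have hv : HasDerivAt (fun ρ : ℝ => hh (t + ρ)) (gg (t + r)) r := by
      simpa [Function.comp_def] using (hasDerivAt_hh (t + r)).comp r ((hasDerivAt_id r).const_add t)
    have hgu : HasDerivAt (fun ρ : ℝ => -gg (t - ρ)) (ggd (t - r)) r := by
      have := ((hasDerivAt_gg (t - r)).comp r ((hasDerivAt_id r).const_sub t)).neg
      simpa [Function.comp_def, Pi.neg_def] using this
    have hgv : HasDerivAt (fun ρ : ℝ => gg (t + ρ)) (ggd (t + r)) r := by
      simpa [Function.comp_def] using (hasDerivAt_gg (t + r)).comp r ((hasDerivAt_id r).const_add t)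
    exact (hasDerivAt_pow 2 r).mul (((hgu.mul hv).add (hu.mul hgv)).const_mul 2)
  simp only [hΩ]
  have e1 : (fun s : ℝ => deriv (fun s' : ℝ => 2 * (hh (s' - r) * hh (s' + r))) s)
      = fun s : ℝ => 2 * (gg (s - r) * hh (s + r) + hh (s - r) * gg (s + r)) :=
    funext fun s => (derivT s).deriv
  have e2 : (fun ρ : ℝ => ρ ^ 2 * deriv (fun ρ' : ℝ => 2 * (hh (t - ρ') * hh (t + ρ'))) ρ)
      = fun ρ : ℝ => ρ ^ 2 * (2 * (-gg (t - ρ) * hh (t + ρ) + hh (t - ρ) * gg (t + ρ))) :=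
    funext fun ρ => by rw [(derivR ρ).deriv]
  rw [e1, e2, derivT2.deriv, derivR2.deriv]
  unfold gg ggd
  have ha2 : hh (t - r) ^ 2 = (1 + (t - r) ^ 2)⁻¹ := hh_sq _
  have hb2 : hh (t + r) ^ 2 = (1 + (t + r) ^ 2)⁻¹ := hh_sq _
  have ha3 : hh (t - r) ^ 3 = hh (t - r) * (1 + (t - r) ^ 2)⁻¹ := by
    rw [show hh (t - r) ^ 3 = hh (t - r) * hh (t - r) ^ 2 by ring, ha2]
  have hb3 : hh (t + r) ^ 3 = hh (t + r) * (1 + (t + r) ^ 2)⁻¹ := by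
    rw [show hh (t + r) ^ 3 = hh (t + r) * hh (t + r) ^ 2 by ring, hb2]
  have ha5 : hh (t - r) ^ 5 = hh (t - r) * ((1 + (t - r) ^ 2)⁻¹) ^ 2 := by
    rw [show hh (t - r) ^ 5 = hh (t - r) * (hh (t - r) ^ 2) ^ 2 by ring, ha2]
  have hb5 : hh (t + r) ^ 5 = hh (t + r) * ((1 + (t + r) ^ 2)⁻¹) ^ 2 := by
    rw [show hh (t + r) ^ 5 = hh (t + r) * (hh (t + r) ^ 2) ^ 2 by ring, hb2]
  have hcube : (2 * (hh (t - r) * hh (t + r))) ^ 3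
      = 8 * (hh (t - r) * (1 + (t - r) ^ 2)⁻¹) * (hh (t + r) * (1 + (t + r) ^ 2)⁻¹) := by
    rw [show (2 * (hh (t - r) * hh (t + r))) ^ 3
        = 8 * (hh (t - r) * hh (t - r) ^ 2) * (hh (t + r) * hh (t + r) ^ 2) by ring, ha2, hb2]
  rw [hcube, ha3, hb3, ha5, hb5]
  have h1 : (1 + (t - r) ^ 2) ≠ 0 := (one_add_sq_pos _).ne'
  have h2 : (1 + (t + r) ^ 2) ≠ 0 := (one_add_sq_pos _).ne'
  field_simp
  ring
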